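/- Let P = Δ_X ∩ L for an affine subspace L ⊆ ℝ^X, let F be a face of P, μ ∈ relint(P), and let μ̂ ∈ F minimize D_KL(·, μ) over F (the information projection of μ to F). Then μ̂ lies in the relative interior of F; in particular μ̂ has maximal support among elements of F. -/

import Mathlib

open Finset

/-- Kullback-Leibler divergence on a finite set (with convention 0·log(0/0)=0). -/
noncomputable def klDiv {X : Type*} [Fintype X] (μ ν : X → ℝ) : ℝ :=
  ∑ x, μ x * Real.log (μ x / ν x)

/-- A linear functional constant on a set is constant on its affine span. -/
lemma lin_const_on_span {E : Type*} [AddCommGroup E] [Module ℝ E]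
    (φ : E →ₗ[ℝ] ℝ) {F : Set E} {c : ℝ} (h : ∀ p ∈ F, φ p = c)
    {v : E} (hv : v ∈ affineSpan ℝ F) : φ v = c := by
  let Q : AffineSubspace ℝ E :=
    { carrier := {w | φ w = c}
      smul_vsub_vadd_mem' := by
        intro t p1 p2 p3 h1 h2 h3
        simp only [Set.mem_setOf_eq] at *
        simp only [vsub_eq_sub, vadd_eq_add, map_add, map_sub, map_smul, smul_eq_mul,
          h1, h2, h3]
        ring }
  have : affineSpan ℝ F ≤ Q := affineSpan_le.mpr (fun p hp => h p hp)
  exact this hv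

/-- Convexity inequality for `u ↦ u * log (u / c)`. -/
lemma kl_convex_ineq {c a b t : ℝ} (hc : 0 < c) (ha : 0 ≤ a) (hb : 0 ≤ b)
    (ht0 : 0 ≤ t) (ht1 : t ≤ 1) :
    ((1 - t) * a + t * b) * Real.log (((1 - t) * a + t * b) / c) ≤
      (1 - t) * (a * Real.log (a / c)) + t * (b * Real.log (b / c)) := by
  have key := Real.convexOn_mul_log.2 ha hb (by linarith : (0:ℝ) ≤ 1 - t) ht0
    (by ring : (1 - t) + t = 1)
  simp only [smul_eq_mul] at key
  have e : ∀ u : ℝ, 0 ≤ u → u * Real.log (u / c) = u * Real.log u - u * Real.log c := by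
    intro u hu
    rcases eq_or_lt_of_le hu with h | h
    · simp [← h]
    · rw [Real.log_div h.ne' hc.ne']; ring
  have hab : 0 ≤ (1 - t) * a + t * b :=
    add_nonneg (mul_nonneg (by linarith) ha) (mul_nonneg ht0 hb)
  rw [e _ hab, e _ ha, e _ hb]
  nlinarith [key]

theorem stmt5 {X : Type*} [Fintype X]
    (L : AffineSubspace ℝ (X → ℝ)) (P : Set (X → ℝ))
    (hP : P = {p | (∀ x, 0 ≤ p x) ∧ ∑ x, p x = 1 ∧ p ∈ L})
    -- `F` is a face of `P`
    (F : Set (X → ℝ)) (hFface : IsExposed ℝ P F) (hFne : F.Nonempty)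
    -- `μ` lies in the relative interior of `P` and is strictly positive
    (μ : X → ℝ) (hμ : μ ∈ intrinsicInterior ℝ P) (hμpos : ∀ x, 0 < μ x)
    -- `μhat` is the information projection of `μ` to `F`
    (μhat : X → ℝ) (hmem : μhat ∈ F)
    (hmin : ∀ p ∈ F, klDiv μhat μ ≤ klDiv p μ) :
    μhat ∈ intrinsicInterior ℝ F ∧ ∀ p ∈ F, ∀ x, 0 < p x → 0 < μhat x := by
  classical
  -- P is convex
  have hPconv : Convex ℝ P := by
    rw [hP]
    have h1 : Convex ℝ {p : X → ℝ | ∀ x, 0 ≤ p x} := by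
      intro p hp q hq a b ha hb hab x
      exact add_nonneg (mul_nonneg ha (hp x)) (mul_nonneg hb (hq x))
    have h2 : Convex ℝ {p : X → ℝ | ∑ x, p x = 1} := by
      intro p hp q hq a b ha hb hab
      simp only [Set.mem_setOf_eq, Pi.add_apply, Pi.smul_apply, smul_eq_mul] at *
      rw [Finset.sum_add_distrib, ← Finset.mul_sum, ← Finset.mul_sum, hp, hq]
      linarith
    have h3 : Convex ℝ (L : Set (X → ℝ)) := L.convex
    have : {p : X → ℝ | (∀ x, 0 ≤ p x) ∧ ∑ x, p x = 1 ∧ p ∈ L} =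
        {p : X → ℝ | ∀ x, 0 ≤ p x} ∩ ({p : X → ℝ | ∑ x, p x = 1} ∩ (L : Set (X → ℝ))) := by
      ext p; simp [Set.mem_inter_iff, and_assoc]
    rw [this]
    exact h1.inter (h2.inter h3)
  have hFconv : Convex ℝ F := hFface.convex hPconv
  obtain ⟨f, hF⟩ := hFface hFne
  have hFP : F ⊆ P := by rw [hF]; exact fun x hx => hx.1
  have hmemP := hFP hmem
  rw [hP] at hmemP
  -- Part A: support maximality
  have keyA : ∀ p ∈ F, ∀ x, 0 < p x → 0 < μhat x := by
    intro p hp x0 hpx0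
    by_contra hneg
    have hpP := hFP hp
    rw [hP] at hpP
    have hmz0 : μhat x0 = 0 := le_antisymm (not_lt.1 hneg) (hmemP.1 x0)
    set K1 := klDiv μhat μ with hK1
    set K2 := klDiv p μ with hK2
    set t := min (1/2 : ℝ) (Real.exp ((K1 - K2) / p x0 - 1)) with htdef
    have ht0 : 0 < t := lt_min (by norm_num) (Real.exp_pos _)
    have ht1 : t ≤ 1/2 := min_le_left _ _
    have hlogt : Real.log t ≤ (K1 - K2) / p x0 - 1 := by
      calc Real.log t ≤ Real.log (Real.exp ((K1 - K2) / p x0 - 1)) :=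
            Real.log_le_log ht0 (min_le_right _ _)
        _ = (K1 - K2) / p x0 - 1 := Real.log_exp _
    set q : X → ℝ := (1 - t) • μhat + t • p with hqdef
    have hqx : ∀ x, q x = (1 - t) * μhat x + t * p x := by
      intro x; simp [hqdef]
    have hqF : q ∈ F := hFconv hmem hp (by linarith) ht0.le (by ring)
    have hle := hmin q hqF
    -- pointwise convexity bound
    have hb : ∀ x, q x * Real.log (q x / μ x) ≤
        (1 - t) * (μhat x * Real.log (μhat x / μ x)) +
          t * (p x * Real.log (p x / μ x)) := by
      intro x
      rw [hqx x]
      exact kl_convex_ineq (hμpos x) (hmemP.1 x) (hpP.1 x) ht0.le (by linarith)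
    -- exact value at x0
    have hx0 : q x0 * Real.log (q x0 / μ x0) =
        t * (p x0 * Real.log (p x0 / μ x0)) + t * p x0 * Real.log t := by
      rw [hqx x0, hmz0]
      have h1 : ((1 - t) * 0 + t * p x0) / μ x0 = t * (p x0 / μ x0) := by
        field_simp
        ring
      rw [h1, Real.log_mul ht0.ne' (div_pos hpx0 (hμpos x0)).ne']
      ring
    have split : ∀ g : X → ℝ, ∑ x, g x = g x0 + ∑ x ∈ Finset.univ.erase x0, g x :=
      fun g => (Finset.add_sum_erase Finset.univ g (Finset.mem_univ x0)).symm
    have hKq : klDiv q μ ≤ (1 - t) * K1 + t * K2 + t * p x0 * Real.log t := by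
      have e1 : klDiv q μ = q x0 * Real.log (q x0 / μ x0) +
          ∑ x ∈ Finset.univ.erase x0, q x * Real.log (q x / μ x) := split _
      have e2 : K1 = μhat x0 * Real.log (μhat x0 / μ x0) +
          ∑ x ∈ Finset.univ.erase x0, μhat x * Real.log (μhat x / μ x) := split _
      have e3 : K2 = p x0 * Real.log (p x0 / μ x0) +
          ∑ x ∈ Finset.univ.erase x0, p x * Real.log (p x / μ x) := split _
      have hsumle : ∑ x ∈ Finset.univ.erase x0, q x * Real.log (q x / μ x) ≤
          ∑ x ∈ Finset.univ.erase x0, ((1 - t) * (μhat x * Real.log (μhat x / μ x)) +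
            t * (p x * Real.log (p x / μ x))) :=
        Finset.sum_le_sum fun x _ => hb x
      rw [Finset.sum_add_distrib, ← Finset.mul_sum, ← Finset.mul_sum] at hsumle
      have hz : μhat x0 * Real.log (μhat x0 / μ x0) = 0 := by rw [hmz0]; ring
      rw [hz] at e2
      rw [e1, hx0]
      nlinarith [hsumle]
    have : K1 ≤ (1 - t) * K1 + t * K2 + t * p x0 * Real.log t := le_trans hle hKq
    have hfin : 0 ≤ K2 - K1 + p x0 * Real.log t := by nlinarith
    have : p x0 * Real.log t ≤ K1 - K2 - p x0 := by
      have := mul_le_mul_of_nonneg_left hlogt hpx0.le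
      have hne : p x0 ≠ 0 := hpx0.ne'
      calc p x0 * Real.log t ≤ p x0 * ((K1 - K2) / p x0 - 1) := this
        _ = K1 - K2 - p x0 := by field_simp
    linarith
  refine ⟨?_, keyA⟩
  -- Part B: μhat is in the intrinsic interior of F
  have hsupp : ∀ x, μhat x = 0 → ∀ p ∈ F, p x = 0 := by
    intro x hx p hp
    have hpP := hFP hp; rw [hP] at hpP
    rcases (hpP.1 x).lt_or_eq with h | h
    · exact absurd (keyA p hp x h) (by rw [hx]; exact lt_irrefl 0)
    · exact h.symm
  have hc : ∀ p ∈ F, f p = f μhat := by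
    intro p hp
    have h1 := hF ▸ hmem
    have h2 := hF ▸ hp
    exact le_antisymm (h1.2 p (hFP hp)) (h2.2 μhat (hFP hmem))
  -- the sum functional
  let sumLin : (X → ℝ) →ₗ[ℝ] ℝ :=
    { toFun := fun v => ∑ x, v x
      map_add' := fun a b => Finset.sum_add_distrib
      map_smul' := fun c a => by simp [Finset.mul_sum] }
  have hLspan : affineSpan ℝ F ≤ L := affineSpan_le.mpr (fun p hp => by
    have := hFP hp; rw [hP] at this; exact this.2.2)
  -- minimal positive coordinate
  set S : Finset X := Finset.univ.filter (fun x => 0 < μhat x) with hSdef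
  have hSne : S.Nonempty := by
    by_contra h
    rw [Finset.not_nonempty_iff_eq_empty] at h
    have : ∀ x, μhat x = 0 := by
      intro x
      have hx : x ∉ S := by rw [h]; exact Finset.notMem_empty x
      simp only [hSdef, Finset.mem_filter, Finset.mem_univ, true_and, not_lt] at hx
      exact le_antisymm hx (hmemP.1 x)
    have h1 := hmemP.2.1
    rw [Finset.sum_congr rfl (fun x _ => this x)] at h1
    simp at h1
  set m : ℝ := S.inf' hSne (fun x => μhat x) with hmdef
  have hm : 0 < m := by
    rw [hmdef, Finset.lt_inf'_iff]
    intro x hx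
    simp only [hSdef, Finset.mem_filter] at hx
    exact hx.2
  -- any point of the affine span close to μhat is in F
  have claim : ∀ v : X → ℝ, v ∈ affineSpan ℝ F → dist v μhat < m → v ∈ F := by
    intro v hv hd
    have hsum : ∑ x, v x = 1 := by
      have := lin_const_on_span sumLin (F := F) (c := 1)
        (fun p hp => by have := hFP hp; rw [hP] at this; exact this.2.1) hv
      exact this
    have hvL : v ∈ L := hLspan hv
    have hzero : ∀ x, μhat x = 0 → v x = 0 := by
      intro x hx
      exact lin_const_on_span (LinearMap.proj x) (F := F) (c := 0)
        (fun p hp => hsupp x hx p hp) hv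
    have hnn : ∀ x, 0 ≤ v x := by
      intro x
      rcases (hmemP.1 x).lt_or_eq with h | h
      · have hxS : x ∈ S := by simp [hSdef, h]
        have hmx : m ≤ μhat x := Finset.inf'_le _ hxS
        have hdx : dist (v x) (μhat x) ≤ dist v μhat := dist_le_pi_dist v μhat x
        rw [Real.dist_eq] at hdx
        have := abs_lt.mp (lt_of_le_of_lt hdx hd)
        linarith [this.1]
      · rw [hzero x h.symm]
    have hvP : v ∈ P := by rw [hP]; exact ⟨hnn, hsum, hvL⟩
    have hfv : f v = f μhat := by
      have := lin_const_on_span (f : (X → ℝ) →ₗ[ℝ] ℝ) (F := F) (c := f μhat)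
        (fun p hp => hc p hp) hv
      exact this
    rw [hF]
    refine ⟨hvP, fun y hy => ?_⟩
    rw [hfv]
    exact (hF ▸ hmem).2 y hy
  -- conclude
  have hmspan : μhat ∈ affineSpan ℝ F := subset_affineSpan ℝ F hmem
  rw [mem_intrinsicInterior]
  refine ⟨⟨μhat, hmspan⟩, ?_, rfl⟩
  rw [mem_interior]
  refine ⟨Subtype.val ⁻¹' Metric.ball μhat m, ?_, ?_, ?_⟩
  · rintro ⟨v, hv⟩ hball
    simp only [Set.mem_preimage, Metric.mem_ball] at hball
    exact claim v hv hball
  · exact Metric.isOpen_ball.preimage continuous_subtype_val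
  · simp only [Set.mem_preimage, Metric.mem_ball]
    simpa using hm
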